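/- Let X be a complex Banach space, let g : [0,∞) → X be locally Bochner integrable, let x > 0 and C > 0, and suppose that ‖e^{-xt} ∫₀ᵗ e^{xs} g(s) ds‖ ≤ C for every t ≥ 0. Then for every y ∈ ℝ, writing z = x + iy, for every t ≥ 0 the improper integral ∫_t^∞ e^{-zs} g(s) ds exists (i.e. the limit of ∫_t^v e^{-zs} g(s) ds as v → ∞ exists in X), and ‖e^{xt} ∫_t^∞ e^{-zs} g(s) ds‖ ≤ C(3 + |y|/x) for every t ≥ 0. -/

import Mathlib

open MeasureTheory Filter Set Topology

-- exp arithmetic helper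
private lemma exp_mul_exp {a b c C : ℝ} (h : a + b = c) :
    Real.exp a * (C * Real.exp b) = C * Real.exp c := by
  rw [← h, Real.exp_add]; ring

theorem stmt_1 {X : Type*} [NormedAddCommGroup X] [NormedSpace ℂ X] [CompleteSpace X]
    (g : ℝ → X) (hg : LocallyIntegrableOn g (Set.Ici 0))
    (x C : ℝ) (hx : 0 < x) (hC : 0 < C)
    (hbound : ∀ t : ℝ, 0 ≤ t →
      ‖Real.exp (-x * t) • ∫ s in Set.Ioc (0 : ℝ) t, Real.exp (x * s) • g s‖ ≤ C) :
    ∀ y : ℝ, ∀ t : ℝ, 0 ≤ t → ∃ L : X,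
      Filter.Tendsto
        (fun v : ℝ => ∫ s in Set.Ioc t v, Complex.exp (-((x : ℂ) + y * Complex.I) * s) • g s)
        Filter.atTop (nhds L) ∧
      ‖Real.exp (x * t) • L‖ ≤ C * (3 + |y| / x) := by
  set h : ℝ → X := fun s => Real.exp (x * s) • g s with hh
  set G : ℝ → X := fun u => ∫ (s : ℝ) in Set.Ioc (0:ℝ) u, h s with hGdef
  -- integrability of h on Ioc a b for 0 ≤ a
  have hInt : ∀ a b : ℝ, 0 ≤ a → IntegrableOn h (Set.Ioc a b) := by
    intro a b ha
    have hgI : IntegrableOn g (Set.Ioc a b) := by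
      refine (hg.integrableOn_compact_subset ?_ isCompact_Icc).mono_set Ioc_subset_Icc_self
      exact fun s hs => le_trans ha hs.1
    refine (hgI.norm.const_mul (Real.exp (x * b))).mono' ?_ ?_
    · exact ((Real.continuous_exp.comp (continuous_const.mul continuous_id)).aestronglyMeasurable).smul hgI.1
    · filter_upwards [ae_restrict_mem measurableSet_Ioc] with s hs
      rw [hh]
      simp only [norm_smul, Real.norm_eq_abs, abs_of_pos (Real.exp_pos _)]
      have : Real.exp (x * s) ≤ Real.exp (x * b) :=
        Real.exp_le_exp.2 (mul_le_mul_of_nonneg_left hs.2 hx.le)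
      exact mul_le_mul_of_nonneg_right this (norm_nonneg _)
  -- the basic bound on G
  have hGbound : ∀ u : ℝ, 0 ≤ u → ‖G u‖ ≤ C * Real.exp (x * u) := by
    intro u hu
    have h1 := hbound u hu
    rw [norm_smul, Real.norm_eq_abs, abs_of_pos (Real.exp_pos _)] at h1
    have e : Real.exp (x * u) * Real.exp (-x * u) = 1 := by
      rw [← Real.exp_add]; ring_nf; exact Real.exp_zero
    nlinarith [Real.exp_pos (x * u), Real.exp_pos (-x * u), norm_nonneg (G u)]
  -- continuity of G on [0, ∞)
  have hGcont : ContinuousOn G (Set.Ici 0) := by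
    intro u hu
    have hicc : IntegrableOn h (Set.Icc 0 (u + 1)) := by
      rw [integrableOn_Icc_iff_integrableOn_Ioc]
      exact hInt 0 (u + 1) le_rfl
    have h1 := (intervalIntegral.continuousOn_primitive hicc) u ⟨hu, by linarith⟩
    refine h1.mono_of_mem_nhdsWithin ?_
    refine Filter.mem_of_superset
      (Filter.inter_mem self_mem_nhdsWithin
        (mem_nhdsWithin_of_mem_nhds (Iio_mem_nhds (lt_add_one u)))) ?_
    exact fun s hs => ⟨hs.1, hs.2.le⟩
  intro y t ht
  set w : ℂ := ((2 * x : ℝ) : ℂ) + (y : ℝ) * Complex.I with hwdef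
  have hw0 : w ≠ 0 := by
    intro hw
    have : (2 * x : ℝ) = 0 := by
      have := congrArg Complex.re hw
      simpa [hwdef] using this
    linarith
  have habs : ∀ u : ℝ, ‖Complex.exp (-w * u)‖ = Real.exp (-(2 * x) * u) := by
    intro u
    rw [Complex.norm_exp]
    congr 1
    simp [hwdef, Complex.mul_re]
  have habs_le_one : ∀ u : ℝ, 0 ≤ u → ‖Complex.exp (-w * u)‖ ≤ 1 := by
    intro u hu
    rw [habs]
    rw [show (1:ℝ) = Real.exp 0 by simp]
    apply Real.exp_le_exp.2
    nlinarith
  -- rewrite of the integrand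
  have hfe : ∀ s : ℝ, Complex.exp (-((x : ℂ) + y * Complex.I) * s) • g s
      = Complex.exp (-w * s) • h s := by
    intro s
    show Complex.exp (-((x : ℂ) + y * Complex.I) * s) • g s
      = Complex.exp (-w * s) • (Real.exp (x * s) • g s)
    rw [show (Real.exp (x * s) • g s : X) = ((Real.exp (x * s) : ℝ) : ℂ) • g s from
      (Complex.coe_smul _ _).symm]
    rw [smul_smul, Complex.ofReal_exp, ← Complex.exp_add]
    congr 2
    push_cast [hwdef]
    ring
    -- norm bound for the integrand of the tail integral
  have hEnorm : ∀ u : ℝ, 0 ≤ u → ‖Complex.exp (-w * u) • G u‖ ≤ C * Real.exp (-x * u) := by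
    intro u hu
    rw [norm_smul, habs]
    calc Real.exp (-(2*x)*u) * ‖G u‖
        ≤ Real.exp (-(2*x)*u) * (C * Real.exp (x*u)) :=
          mul_le_mul_of_nonneg_left (hGbound u hu) (Real.exp_pos _).le
      _ = C * Real.exp (-x*u) := exp_mul_exp (by ring)
  have hexpc : Continuous fun u : ℝ => Complex.exp (-w * u) :=
    Complex.continuous_exp.comp (continuous_const.mul Complex.continuous_ofReal)
  have hGmeas : AEStronglyMeasurable G (volume.restrict (Set.Ioi t)) :=
    (hGcont.mono fun u hu => le_trans ht (le_of_lt hu)).aestronglyMeasurable measurableSet_Ioi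
  have hEint : IntegrableOn (fun u : ℝ => Complex.exp (-w * u) • G u) (Set.Ioi t) := by
    refine ((exp_neg_integrableOn_Ioi t hx).const_mul C).mono'
      (hexpc.aestronglyMeasurable.smul hGmeas) ?_
    filter_upwards [ae_restrict_mem measurableSet_Ioi] with u hu
    exact hEnorm u (le_trans ht hu.le)
  -- difference of G values as an integral
  have hGdiff : ∀ u : ℝ, t ≤ u → (∫ (s : ℝ) in Set.Ioc t u, h s) = G u - G t := by
    intro u hu
    have hun := setIntegral_union (Set.Ioc_disjoint_Ioc_of_le le_rfl) measurableSet_Ioc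
      (hInt 0 t le_rfl) (hInt t u ht) (f := h) (μ := volume)
    rw [Set.Ioc_union_Ioc_eq_Ioc ht hu] at hun
    simp only [hGdef]
    rw [eq_sub_iff_add_eq, add_comm]
    exact hun.symm
  -- the key integration-by-parts identity
  have hkey : ∀ v : ℝ, t ≤ v →
      (∫ (s : ℝ) in Set.Ioc t v, Complex.exp (-((x : ℂ) + y * Complex.I) * s) • g s)
        = Complex.exp (-w * v) • G v - Complex.exp (-w * t) • G t
          + w • ∫ (u : ℝ) in Set.Ioc t v, Complex.exp (-w * u) • G u := by
    intro v hv
    have hIh : IntegrableOn h (Set.Ioc t v) := hInt t v ht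
    have hq : ∀ s : ℝ, s ≤ v → (∫ (u : ℝ) in Set.Ioc s v, Complex.exp (-w * u))
        = (Complex.exp (-w * s) - Complex.exp (-w * v)) / w := by
      intro s hs
      rw [← intervalIntegral.integral_of_le hs, integral_exp_mul_complex (neg_ne_zero.2 hw0),
        div_neg, ← neg_div, neg_sub]
    have hdecomp : ∀ s : ℝ, Complex.exp (-w * s) • h s
        = Complex.exp (-w * v) • h s + (Complex.exp (-w * s) - Complex.exp (-w * v)) • h s := by
      intro s
      rw [← add_smul]
      congr 1
      ring
    have hI1 : IntegrableOn (fun s : ℝ => Complex.exp (-w * v) • h s) (Set.Ioc t v) :=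
      hIh.smul (Complex.exp (-w * v))
    have hI2 : IntegrableOn (fun s : ℝ => (Complex.exp (-w * s) - Complex.exp (-w * v)) • h s)
        (Set.Ioc t v) := by
      refine (hIh.norm.const_mul 2).mono'
        (((hexpc.sub continuous_const).aestronglyMeasurable).smul hIh.1) ?_
      filter_upwards [ae_restrict_mem measurableSet_Ioc] with s hs
      rw [norm_smul]
      have h0s : (0:ℝ) ≤ s := le_trans ht hs.1.le
      have h0v : (0:ℝ) ≤ v := le_trans h0s hs.2
      have hle : ‖Complex.exp (-w * s) - Complex.exp (-w * v)‖ ≤ 2 := by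
        calc ‖Complex.exp (-w * s) - Complex.exp (-w * v)‖
            ≤ ‖Complex.exp (-w * (s:ℝ))‖ + ‖Complex.exp (-w * (v:ℝ))‖ := norm_sub_le _ _
          _ ≤ 1 + 1 := add_le_add (habs_le_one s h0s) (habs_le_one v h0v)
          _ = 2 := by norm_num
      exact mul_le_mul_of_nonneg_right hle (norm_nonneg _)
    -- Fubini
    have hFub : (∫ (s : ℝ) in Set.Ioc t v, (∫ (u : ℝ) in Set.Ioc s v, Complex.exp (-w * u)) • h s)
        = ∫ (u : ℝ) in Set.Ioc t v, Complex.exp (-w * u) • (∫ (s : ℝ) in Set.Ioc t u, h s) := by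
      set μ : Measure ℝ := volume.restrict (Set.Ioc t v) with hμ
      set f : ℝ → ℝ → X :=
        fun s u => ((Set.Ioc s v).indicator (fun r : ℝ => Complex.exp (-w * r)) u) • h s with hfdef
      have hone : IntegrableOn (fun _ : ℝ => (1:ℝ)) (Set.Ioc t v) :=
        integrableOn_const measure_Ioc_lt_top.ne
      have hfint : Integrable (Function.uncurry f) (μ.prod μ) := by
        have hind : (fun p : ℝ × ℝ =>
              (Set.Ioc p.1 v).indicator (fun r : ℝ => Complex.exp (-w * r)) p.2)
            = ({p : ℝ × ℝ | p.1 < p.2 ∧ p.2 ≤ v}).indicator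
                (fun p => Complex.exp (-w * p.2)) := by
          ext p
          by_cases hp : p.1 < p.2 ∧ p.2 ≤ v
          · rw [Set.indicator_of_mem (show p.2 ∈ Set.Ioc p.1 v from hp),
              Set.indicator_of_mem (show p ∈ {p : ℝ × ℝ | p.1 < p.2 ∧ p.2 ≤ v} from hp)]
          · rw [Set.indicator_of_notMem (show p.2 ∉ Set.Ioc p.1 v from hp),
              Set.indicator_of_notMem (show p ∉ {p : ℝ × ℝ | p.1 < p.2 ∧ p.2 ≤ v} from hp)]
        have hsm : StronglyMeasurable (fun p : ℝ × ℝ =>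
            (Set.Ioc p.1 v).indicator (fun r : ℝ => Complex.exp (-w * r)) p.2) := by
          rw [hind]
          refine StronglyMeasurable.indicator ?_ ?_
          · exact (Complex.continuous_exp.comp
              (continuous_const.mul (Complex.continuous_ofReal.comp continuous_snd))).stronglyMeasurable
          · exact (measurableSet_lt measurable_fst measurable_snd).inter
              (measurableSet_le measurable_snd measurable_const)
        have haesm : AEStronglyMeasurable (Function.uncurry f) (μ.prod μ) :=
          hsm.aestronglyMeasurable.smul hIh.1.comp_fst
        refine Integrable.mono' (hIh.norm.mul_prod hone) haesm ?_
        have hps : ∀ᵐ p : ℝ × ℝ ∂(μ.prod μ), p ∈ (Set.Ioc t v) ×ˢ (Set.Ioc t v) := by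
          rw [hμ, Measure.prod_restrict]
          exact ae_restrict_mem (measurableSet_Ioc.prod measurableSet_Ioc)
        filter_upwards [hps] with p hp
        show ‖f p.1 p.2‖ ≤ ‖h p.1‖ * 1
        rw [hfdef]
        simp only []
        rw [norm_smul, mul_one]
        by_cases hmem : p.2 ∈ Set.Ioc p.1 v
        · rw [Set.indicator_of_mem hmem]
          calc ‖Complex.exp (-w * (p.2:ℝ))‖ * ‖h p.1‖
              ≤ 1 * ‖h p.1‖ := mul_le_mul_of_nonneg_right
                (habs_le_one p.2 (le_trans ht hp.2.1.le)) (norm_nonneg _)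
            _ = ‖h p.1‖ := one_mul _
        · rw [Set.indicator_of_notMem hmem]
          simp [norm_nonneg]
      have hswap := integral_integral_swap hfint
      have hL : (∫ s, (∫ u, f s u ∂μ) ∂μ)
          = ∫ (s : ℝ) in Set.Ioc t v, (∫ (u : ℝ) in Set.Ioc s v, Complex.exp (-w * u)) • h s := by
        rw [hμ]
        refine setIntegral_congr_fun measurableSet_Ioc fun s hs => ?_
        show (∫ u, ((Set.Ioc s v).indicator (fun r : ℝ => Complex.exp (-w * r)) u) • h s ∂μ)
          = (∫ (u : ℝ) in Set.Ioc s v, Complex.exp (-w * u)) • h s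
        rw [integral_smul_const]
        congr 1
        rw [hμ, integral_indicator measurableSet_Ioc,
          Measure.restrict_restrict measurableSet_Ioc, Set.Ioc_inter_Ioc,
          max_eq_left hs.1.le, min_self]
      have hR : (∫ u, (∫ s, f s u ∂μ) ∂μ)
          = ∫ (u : ℝ) in Set.Ioc t v, Complex.exp (-w * u) • (∫ (s : ℝ) in Set.Ioc t u, h s) := by
        rw [hμ]
        refine setIntegral_congr_fun measurableSet_Ioc fun u hu => ?_
        have hfu : ∀ s : ℝ, f s u
            = (Set.Iio u).indicator (fun s : ℝ => Complex.exp (-w * u) • h s) s := by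
          intro s
          by_cases hsu : s < u
          · rw [Set.indicator_of_mem (show s ∈ Set.Iio u from hsu)]
            show ((Set.Ioc s v).indicator (fun r : ℝ => Complex.exp (-w * r)) u) • h s
              = Complex.exp (-w * u) • h s
            rw [Set.indicator_of_mem (show u ∈ Set.Ioc s v from ⟨hsu, hu.2⟩)]
          · rw [Set.indicator_of_notMem (show s ∉ Set.Iio u from hsu)]
            show ((Set.Ioc s v).indicator (fun r : ℝ => Complex.exp (-w * r)) u) • h s = 0
            rw [Set.indicator_of_notMem (show u ∉ Set.Ioc s v from fun hmem => hsu hmem.1)]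
            rw [zero_smul]
        calc (∫ s, f s u ∂μ)
            = ∫ s, (Set.Iio u).indicator (fun s : ℝ => Complex.exp (-w * u) • h s) s ∂μ := by
              exact integral_congr_ae (Filter.Eventually.of_forall hfu)
          _ = Complex.exp (-w * u) • (∫ (s : ℝ) in Set.Ioc t u, h s) := by
              rw [hμ, integral_indicator measurableSet_Iio,
                Measure.restrict_restrict measurableSet_Iio]
              have hset : Set.Iio u ∩ Set.Ioc t v = Set.Ioo t u := by
                ext s
                constructor
                · rintro ⟨h1, h2, h3⟩
                  exact ⟨h2, h1⟩
                · rintro ⟨h1, h2⟩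
                  exact ⟨h2, h1, le_trans h2.le hu.2⟩
              rw [hset, ← integral_Ioc_eq_integral_Ioo, integral_smul]
      rw [← hL, ← hR]
      exact hswap
    have h2 : (∫ (s : ℝ) in Set.Ioc t v, (Complex.exp (-w * s) - Complex.exp (-w * v)) • h s)
        = w • ∫ (u : ℝ) in Set.Ioc t v, Complex.exp (-w * u) • (G u - G t) := by
      have step1 : Set.EqOn (fun s : ℝ => (Complex.exp (-w * s) - Complex.exp (-w * v)) • h s)
          (fun s : ℝ => w • ((∫ (u : ℝ) in Set.Ioc s v, Complex.exp (-w * u)) • h s)) (Set.Ioc t v) := by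
        intro s hs
        simp only []
        rw [hq s hs.2, smul_smul, mul_div_cancel₀ _ hw0]
      rw [setIntegral_congr_fun measurableSet_Ioc step1, integral_smul, hFub]
      congr 1
      refine setIntegral_congr_fun measurableSet_Ioc fun u hu => ?_
      rw [hGdiff u hu.1.le]
    have h3 : (∫ (u : ℝ) in Set.Ioc t v, Complex.exp (-w * u) • (G u - G t))
        = (∫ (u : ℝ) in Set.Ioc t v, Complex.exp (-w * u) • G u)
          - ((Complex.exp (-w * t) - Complex.exp (-w * v)) / w) • G t := by
      have hi1 : IntegrableOn (fun u : ℝ => Complex.exp (-w * u) • G u) (Set.Ioc t v) :=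
        hEint.mono_set Set.Ioc_subset_Ioi_self
      have hi2 : IntegrableOn (fun u : ℝ => Complex.exp (-w * u) • G t) (Set.Ioc t v) :=
        (hexpc.integrableOn_Ioc).smul_const (G t)
      calc (∫ (u : ℝ) in Set.Ioc t v, Complex.exp (-w * u) • (G u - G t))
          = ∫ (u : ℝ) in Set.Ioc t v,
              (Complex.exp (-w * u) • G u - Complex.exp (-w * u) • G t) := by
            exact setIntegral_congr_fun measurableSet_Ioc fun u _ => smul_sub _ _ _
        _ = (∫ (u : ℝ) in Set.Ioc t v, Complex.exp (-w * u) • G u)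
            - ∫ (u : ℝ) in Set.Ioc t v, Complex.exp (-w * u) • G t := integral_sub hi1 hi2
        _ = _ := by rw [integral_smul_const, hq t hv]
    calc (∫ (s : ℝ) in Set.Ioc t v, Complex.exp (-((x : ℂ) + y * Complex.I) * s) • g s)
        = ∫ (s : ℝ) in Set.Ioc t v, Complex.exp (-w * s) • h s :=
          setIntegral_congr_fun measurableSet_Ioc fun s _ => hfe s
      _ = (∫ (s : ℝ) in Set.Ioc t v, Complex.exp (-w * v) • h s)
          + ∫ (s : ℝ) in Set.Ioc t v, (Complex.exp (-w * s) - Complex.exp (-w * v)) • h s := by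
          rw [← integral_add hI1 hI2]
          exact setIntegral_congr_fun measurableSet_Ioc fun s _ => hdecomp s
      _ = Complex.exp (-w * v) • (G v - G t)
          + w • ((∫ (u : ℝ) in Set.Ioc t v, Complex.exp (-w * u) • G u)
            - ((Complex.exp (-w * t) - Complex.exp (-w * v)) / w) • G t) := by
          rw [integral_smul, hGdiff v hv, h2, h3]
      _ = _ := by
          rw [smul_sub w, smul_smul, mul_div_cancel₀ _ hw0, smul_sub, sub_smul]
          abel
  -- the limit
  set J : X := ∫ (u : ℝ) in Set.Ioi t, Complex.exp (-w * u) • G u with hJ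
  refine ⟨(0:X) - Complex.exp (-w * t) • G t + w • J, ?_, ?_⟩
  · have h1 : Tendsto (fun v : ℝ => Complex.exp (-w * v) • G v) atTop (𝓝 0) := by
      have hxv : Tendsto (fun v : ℝ => x * v) atTop atTop :=
        Filter.Tendsto.const_mul_atTop hx tendsto_id
      have hcomp := Real.tendsto_exp_neg_atTop_nhds_zero.comp hxv
      have hbnd : Tendsto (fun v : ℝ => C * Real.exp (-x * v)) atTop (𝓝 0) := by
        have h2 : Tendsto (fun v : ℝ => C * Real.exp (-x * v)) atTop (𝓝 (C * 0)) := by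
          refine Tendsto.const_mul C (hcomp.congr fun v => ?_)
          simp [Function.comp, neg_mul]
        simpa using h2
      refine squeeze_zero_norm' ?_ hbnd
      filter_upwards [eventually_ge_atTop (0:ℝ)] with v hv
      exact hEnorm v hv
    have h2 : Tendsto (fun v : ℝ => ∫ (u : ℝ) in Set.Ioc t v, Complex.exp (-w * u) • G u)
        atTop (𝓝 J) := by
      have h3 := intervalIntegral_tendsto_integral_Ioi t hEint tendsto_id
      refine h3.congr' ?_
      filter_upwards [eventually_ge_atTop t] with v hv
      simp only [id_eq]
      rw [intervalIntegral.integral_of_le hv]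
    have h4 := (h1.sub (tendsto_const_nhds
        (x := Complex.exp (-w * t) • G t) (f := atTop))).add (h2.const_smul w)
    refine Filter.Tendsto.congr' ?_ h4
    filter_upwards [eventually_ge_atTop t] with v hv
    exact (hkey v hv).symm
  · -- the bound
    have hIoiexp : (∫ (u : ℝ) in Set.Ioi t, Real.exp (-x * u)) = Real.exp (-x * t) / x := by
      have hd : ∀ u ∈ Set.Ici t, HasDerivAt (fun r : ℝ => -(Real.exp (-x * r) / x))
          (Real.exp (-x * u)) u := by
        intro u _
        have h1 : HasDerivAt (fun r : ℝ => -x * r) (-x) u := by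
          simpa using (hasDerivAt_id u).const_mul (-x)
        have h2 := (Real.hasDerivAt_exp (-x * u)).comp u h1
        have h3 := (h2.div_const x).neg
        exact h3.congr_deriv (by rw [mul_neg, neg_div, neg_neg, mul_div_assoc, div_self hx.ne', mul_one])
      have htend : Tendsto (fun r : ℝ => -(Real.exp (-x * r) / x)) atTop (𝓝 0) := by
        have hxv : Tendsto (fun v : ℝ => x * v) atTop atTop :=
          Filter.Tendsto.const_mul_atTop hx tendsto_id
        have h5 := Real.tendsto_exp_neg_atTop_nhds_zero.comp hxv
        have h6 : Tendsto (fun r : ℝ => -(Real.exp (-x * r) / x)) atTop (𝓝 (-(0 / x))) := by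
          refine Tendsto.neg (Tendsto.div_const ?_ x)
          refine h5.congr fun v => ?_
          simp [Function.comp, neg_mul]
        simpa using h6
      have := integral_Ioi_of_hasDerivAt_of_tendsto' hd (exp_neg_integrableOn_Ioi t hx) htend
      rw [this]
      ring
    have hJle : ‖J‖ ≤ C * (Real.exp (-x * t) / x) := by
      have hb : IntegrableOn (fun u : ℝ => C * Real.exp (-x * u)) (Set.Ioi t) :=
        (exp_neg_integrableOn_Ioi t hx).const_mul C
      calc ‖J‖ ≤ ∫ (u : ℝ) in Set.Ioi t, C * Real.exp (-x * u) := by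
            refine norm_integral_le_of_norm_le hb ?_
            filter_upwards [ae_restrict_mem measurableSet_Ioi] with u hu
            exact hEnorm u (le_trans ht hu.le)
        _ = C * (Real.exp (-x * t) / x) := by rw [integral_const_mul, hIoiexp]
    have hwabs : ‖w‖ ≤ 2 * x + |y| := by
      calc ‖w‖ ≤ ‖((2 * x : ℝ) : ℂ)‖ + ‖(y : ℂ) * Complex.I‖ := norm_add_le _ _
        _ = |2 * x| + |y| := by
            rw [norm_mul, Complex.norm_I, mul_one, Complex.norm_real, Complex.norm_real,
              Real.norm_eq_abs, Real.norm_eq_abs]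
        _ = 2 * x + |y| := by rw [abs_of_pos (by linarith)]
    have hGt : ‖Complex.exp (-w * t) • G t‖ ≤ C * Real.exp (-x * t) := hEnorm t ht
    rw [norm_smul, Real.norm_eq_abs, abs_of_pos (Real.exp_pos _)]
    have hLnorm : ‖(0:X) - Complex.exp (-w * t) • G t + w • J‖
        ≤ C * Real.exp (-x * t) + ‖w‖ * ‖J‖ := by
      calc ‖(0:X) - Complex.exp (-w * t) • G t + w • J‖
          ≤ ‖(0:X) - Complex.exp (-w * t) • G t‖ + ‖w • J‖ := norm_add_le _ _
        _ = ‖Complex.exp (-w * t) • G t‖ + ‖w‖ * ‖J‖ := by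
            rw [zero_sub, norm_neg, norm_smul w J]
        _ ≤ C * Real.exp (-x * t) + ‖w‖ * ‖J‖ := by
            exact add_le_add hGt le_rfl
    calc Real.exp (x * t) * ‖(0:X) - Complex.exp (-w * t) • G t + w • J‖
        ≤ Real.exp (x * t) * (C * Real.exp (-x * t) + ‖w‖ * ‖J‖) :=
          mul_le_mul_of_nonneg_left hLnorm (Real.exp_pos _).le
      _ ≤ Real.exp (x * t)
          * (C * Real.exp (-x * t) + (2 * x + |y|) * (C * (Real.exp (-x * t) / x))) := by
          refine mul_le_mul_of_nonneg_left (add_le_add le_rfl ?_) (Real.exp_pos _).le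
          exact mul_le_mul hwabs hJle (norm_nonneg _) (by positivity)
      _ = C * (3 + |y| / x) := by
          have hee : Real.exp (x * t) * Real.exp (-(x * t)) = 1 := by
            rw [← Real.exp_add]
            simp
          have hx0 : x ≠ 0 := hx.ne'
          field_simp
          linear_combination (3 * x + |y|) * hee
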